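/- If f : [0,1] → ℝ is absolutely continuous, f' ∈ L¹(0,1), and f'(t) ≤ Γ₁ for all t ∈ [0,1], then |Q(f)| ≤ (1/2 - √2/8)(Γ₁ - S), where S = f(1) - f(0) and Q(f) = ∫₀¹ f(t) dt - (√2/8) f(0) - (1 - √2/4) f(1/2) - (√2/8) f(1). -/

import Mathlib

open MeasureTheory Real Set

lemma fubini_aux (g : ℝ → ℝ) (hg : IntegrableOn g (Set.Ioc 0 1)) :
    ∫ t in (0:ℝ)..1, (∫ s in (0:ℝ)..t, g s) = ∫ s in (0:ℝ)..1, (1 - s) * g s := by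
  set g1 : ℝ → ℝ := (Set.Ioc (0:ℝ) 1).indicator g with hg1def
  have hg1i : Integrable g1 := (integrable_indicator_iff measurableSet_Ioc).2 hg
  set A : Set (ℝ × ℝ) := {p : ℝ × ℝ | p.2 ≤ p.1 ∧ p.1 ≤ 1} with hAdef
  have hAm : MeasurableSet A := by
    have : A = {p : ℝ × ℝ | p.2 ≤ p.1} ∩ {p : ℝ × ℝ | p.1 ≤ 1} := rfl
    rw [this]
    exact (measurableSet_le measurable_snd measurable_fst).inter
      (measurableSet_le measurable_fst measurable_const)
  set H : ℝ × ℝ → ℝ := A.indicator (fun p => g1 p.2) with hHdef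
  have hHm : AEStronglyMeasurable H (volume.prod volume) :=
    (hg1i.aestronglyMeasurable.comp_snd).indicator hAm
  have hHi : Integrable H (volume.prod volume) := by
    have hb1 : Integrable ((Set.Icc (0:ℝ) 1).indicator (fun _ => (1:ℝ))) volume :=
      (integrable_indicator_iff measurableSet_Icc).2 (integrableOn_const (by simp))
    have hbound : Integrable (fun p : ℝ × ℝ =>
        ((Set.Icc (0:ℝ) 1).indicator (fun _ => (1:ℝ)) p.1) * |g1 p.2|) (volume.prod volume) :=
      hb1.mul_prod hg1i.abs
    refine hbound.mono' hHm (Filter.Eventually.of_forall ?_)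
    intro p
    rcases eq_or_ne (g1 p.2) 0 with h0 | h0
    · have hH0 : H p = 0 := by
        by_cases hp : p ∈ A
        · simp [hHdef, Set.indicator_of_mem hp, h0]
        · simp [hHdef, Set.indicator_of_notMem hp]
      rw [hH0]
      simp only [norm_zero]
      exact mul_nonneg (Set.indicator_nonneg (fun _ _ => zero_le_one) _) (abs_nonneg _)
    · have hp2 : p.2 ∈ Set.Ioc (0:ℝ) 1 := by
        by_contra hmem
        exact h0 (Set.indicator_of_notMem hmem g)
      by_cases hp : p ∈ A
      · have h1 : p.1 ∈ Set.Icc (0:ℝ) 1 := ⟨le_trans hp2.1.le hp.1, hp.2⟩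
        rw [hHdef] at *
        simp [Set.indicator_of_mem hp, Set.indicator_of_mem h1, Real.norm_eq_abs]
      · rw [hHdef]
        simp only [Set.indicator_of_notMem hp, norm_zero]
        exact mul_nonneg (Set.indicator_nonneg (fun _ _ => zero_le_one) _) (abs_nonneg _)
  have swap : (∫ t : ℝ, ∫ s : ℝ, H (t, s)) = ∫ s : ℝ, ∫ t : ℝ, H (t, s) :=
    integral_integral_swap hHi
  -- left side
  have hL : ∀ t : ℝ, (∫ s : ℝ, H (t, s))
      = (Set.Ioc (0:ℝ) 1).indicator (fun t => ∫ s in (0:ℝ)..t, g s) t := by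
    intro t
    by_cases ht : t ∈ Set.Ioc (0:ℝ) 1
    · rw [Set.indicator_of_mem ht]
      have hfun : (fun s => H (t, s)) = (Set.Iic t).indicator g1 := by
        funext s
        by_cases hs : s ∈ Set.Iic t
        · have hmem : (t, s) ∈ A := ⟨hs, ht.2⟩
          rw [Set.indicator_of_mem hs, hHdef, Set.indicator_of_mem hmem]
        · have hmem : (t, s) ∉ A := fun hh => hs hh.1
          rw [Set.indicator_of_notMem hs, hHdef, Set.indicator_of_notMem hmem]
      rw [hfun, integral_indicator measurableSet_Iic, hg1def,
        setIntegral_indicator measurableSet_Ioc,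
        intervalIntegral.integral_of_le ht.1.le]
      congr 1
      rw [Set.Iic_inter_Ioc_of_le ht.2]
    · rw [Set.indicator_of_notMem ht]
      have hfun : (fun s => H (t, s)) = fun _ => (0:ℝ) := by
        funext s
        rcases lt_or_ge (1:ℝ) t with h1 | h1
        · have hmem : (t, s) ∉ A := fun hh => absurd hh.2 (not_le.2 h1)
          rw [hHdef, Set.indicator_of_notMem hmem]
        · have ht0 : t ≤ 0 := by
            by_contra hh
            exact ht ⟨not_le.1 hh, h1⟩
          by_cases hmem : (t, s) ∈ A
          · have : g1 s = 0 := by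
              apply Set.indicator_of_notMem
              intro hs
              exact absurd (hs.1.trans_le (hmem.1.trans ht0)) (lt_irrefl 0)
            rw [hHdef, Set.indicator_of_mem hmem]
            exact this
          · rw [hHdef, Set.indicator_of_notMem hmem]
      rw [hfun, integral_zero]
  -- right side
  have hR : ∀ s : ℝ, (∫ t : ℝ, H (t, s)) = (1 - s) * g1 s := by
    intro s
    have hfun : (fun t => H (t, s)) = (Set.Icc s 1).indicator (fun _ => g1 s) := by
      funext t
      by_cases ht : t ∈ Set.Icc s 1
      · have hmem : (t, s) ∈ A := ⟨ht.1, ht.2⟩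
        rw [Set.indicator_of_mem ht, hHdef, Set.indicator_of_mem hmem]
      · have hmem : (t, s) ∉ A := fun hh => ht ⟨hh.1, hh.2⟩
        rw [Set.indicator_of_notMem ht, hHdef, Set.indicator_of_notMem hmem]
    rw [hfun, integral_indicator measurableSet_Icc, setIntegral_const, smul_eq_mul,
      measureReal_def, Real.volume_Icc]
    rcases le_or_gt s 1 with hs | hs
    · rw [ENNReal.toReal_ofReal (by linarith)]
    · have h0 : g1 s = 0 := Set.indicator_of_notMem (fun hh => absurd hh.2 (not_le.2 hs)) g
      rw [h0]
      simp
  calc ∫ t in (0:ℝ)..1, (∫ s in (0:ℝ)..t, g s)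
      = ∫ t : ℝ, ∫ s : ℝ, H (t, s) := by
        rw [intervalIntegral.integral_of_le (by norm_num : (0:ℝ) ≤ 1),
          ← integral_indicator measurableSet_Ioc]
        exact (integral_congr_ae (Filter.Eventually.of_forall fun t => (hL t).symm))
    _ = ∫ s : ℝ, ∫ t : ℝ, H (t, s) := swap
    _ = ∫ s : ℝ, (1 - s) * g1 s := integral_congr_ae (Filter.Eventually.of_forall hR)
    _ = ∫ s in (0:ℝ)..1, (1 - s) * g s := by
        rw [intervalIntegral.integral_of_le (by norm_num : (0:ℝ) ≤ 1),
          ← integral_indicator measurableSet_Ioc]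
        apply integral_congr_ae (Filter.Eventually.of_forall _)
        intro s
        by_cases hs : s ∈ Set.Ioc (0:ℝ) 1
        · rw [hg1def, Set.indicator_of_mem hs, Set.indicator_of_mem hs]
        · rw [hg1def, Set.indicator_of_notMem hs, Set.indicator_of_notMem hs, mul_zero]

theorem stmt_9 (f f' : ℝ → ℝ) (Γ₁ : ℝ)
    (hac : ∀ t ∈ Icc (0:ℝ) 1, f t = f 0 + ∫ s in (0:ℝ)..t, f' s)
    (hint : IntervalIntegrable f' volume 0 1)
    (hbd : ∀ t ∈ Icc (0:ℝ) 1, f' t ≤ Γ₁) :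
    |(∫ t in (0:ℝ)..1, f t) - Real.sqrt 2 / 8 * f 0
        - (1 - Real.sqrt 2 / 4) * f (1/2) - Real.sqrt 2 / 8 * f 1|
      ≤ (1/2 - Real.sqrt 2 / 8) * (Γ₁ - (f 1 - f 0)) := by
  have hsq : Real.sqrt 2 ^ 2 = 2 := Real.sq_sqrt (by norm_num)
  have hs0 : (0:ℝ) ≤ Real.sqrt 2 := Real.sqrt_nonneg 2
  have hs1 : (1:ℝ) ≤ Real.sqrt 2 := by nlinarith
  have hs2 : Real.sqrt 2 ≤ 3/2 := by nlinarith
  set c : ℝ := Real.sqrt 2 / 8 with hcdef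
  have hgi : IntegrableOn f' (Set.Ioc 0 1) := by
    rwa [intervalIntegrable_iff_integrableOn_Ioc_of_le (by norm_num : (0:ℝ) ≤ 1)] at hint
  -- notation
  set I : ℝ := ∫ s in (0:ℝ)..1, f' s with hIdef
  set I1 : ℝ := ∫ s in (0:ℝ)..(1/2:ℝ), f' s with hI1def
  set J : ℝ := ∫ s in (0:ℝ)..1, (1 - s) * f' s with hJdef
  have hf1 : f 1 = f 0 + I := hac 1 (by norm_num)
  have hfh : f (1/2) = f 0 + I1 := hac (1/2) (by norm_num)
  -- integral of f
  have hintf : ∫ t in (0:ℝ)..1, f t = f 0 + J := by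
    have h1 : ∫ t in (0:ℝ)..1, f t
        = ∫ t in (0:ℝ)..1, (f 0 + ∫ s in (0:ℝ)..t, f' s) := by
      apply intervalIntegral.integral_congr
      intro t ht
      rw [Set.uIcc_of_le (by norm_num : (0:ℝ) ≤ 1)] at ht
      exact hac t ht
    have hprim : IntervalIntegrable (fun t => ∫ s in (0:ℝ)..t, f' s) volume 0 1 :=
      (intervalIntegral.continuousOn_primitive_interval' hint
        Set.left_mem_uIcc).intervalIntegrable
    rw [h1, intervalIntegral.integral_add (intervalIntegrable_const) hprim,
      intervalIntegral.integral_const, fubini_aux f' hgi]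
    simp [hJdef]
  -- indicator function for [0,1/2]
  set ind : ℝ → ℝ := fun s => if s ≤ 1/2 then 1 else 0 with hinddef
  have hindm : AEStronglyMeasurable ind volume := by
    have : ind = (Set.Iic (1/2:ℝ)).indicator (fun _ => (1:ℝ)) := by
      funext s; by_cases hs : s ≤ 1/2 <;> simp [hinddef, hs, Set.indicator_apply]
    rw [this]
    exact ((stronglyMeasurable_const).indicator measurableSet_Iic).aestronglyMeasurable
  have hindb : ∀ s : ℝ, ‖ind s‖ ≤ 1 := by
    intro s
    by_cases hs : s ≤ 1/2
    · simp only [hinddef, if_pos hs, norm_one, le_refl]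
    · simp only [hinddef, if_neg hs, norm_zero]; norm_num
  have hii_indf : IntervalIntegrable (fun s => ind s * f' s) volume 0 1 := by
    rw [intervalIntegrable_iff_integrableOn_Ioc_of_le (by norm_num : (0:ℝ) ≤ 1)]
    exact hgi.bdd_mul hindm.restrict (Filter.Eventually.of_forall hindb)
  have hii_oneminus : IntervalIntegrable (fun s => (1 - s) * f' s) volume 0 1 :=
    hint.continuousOn_mul (by fun_prop)
  have hsub1 : Set.uIcc (0:ℝ) (1/2) ⊆ Set.uIcc (0:ℝ) 1 := by
    rw [Set.uIcc_of_le (by norm_num : (0:ℝ) ≤ (1/2:ℝ)),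
      Set.uIcc_of_le (by norm_num : (0:ℝ) ≤ 1)]
    exact Set.Icc_subset_Icc le_rfl (by norm_num)
  have hsub2 : Set.uIcc (1/2:ℝ) 1 ⊆ Set.uIcc (0:ℝ) 1 := by
    rw [Set.uIcc_of_le (by norm_num : (1/2:ℝ) ≤ 1),
      Set.uIcc_of_le (by norm_num : (0:ℝ) ≤ 1)]
    exact Set.Icc_subset_Icc (by norm_num) le_rfl
  -- ∫ ind * f' = I1
  have hindint : ∫ s in (0:ℝ)..1, ind s * f' s = I1 := by
    have hsplit : (∫ s in (0:ℝ)..(1/2:ℝ), ind s * f' s) + ∫ s in (1/2:ℝ)..1, ind s * f' s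
        = ∫ s in (0:ℝ)..1, ind s * f' s :=
      intervalIntegral.integral_add_adjacent_intervals
        (hii_indf.mono_set hsub1) (hii_indf.mono_set hsub2)
    have h1 : ∫ s in (0:ℝ)..(1/2:ℝ), ind s * f' s = I1 := by
      rw [hI1def]
      apply intervalIntegral.integral_congr_ae
      apply Filter.Eventually.of_forall
      intro s hs
      rw [Set.uIoc_of_le (by norm_num : (0:ℝ) ≤ (1/2:ℝ))] at hs
      simp only [hinddef, if_pos hs.2, one_mul]
    have h2 : ∫ s in (1/2:ℝ)..1, ind s * f' s = 0 := by
      have : ∫ s in (1/2:ℝ)..1, ind s * f' s = ∫ _ in (1/2:ℝ)..1, (0:ℝ) := by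
        apply intervalIntegral.integral_congr_ae
        apply Filter.Eventually.of_forall
        intro s hs
        rw [Set.uIoc_of_le (by norm_num : (1/2:ℝ) ≤ 1)] at hs
        simp only [hinddef, if_neg (not_le.2 hs.1), zero_mul]
      rw [this]
      simp
    rw [← hsplit, h1, h2, add_zero]
  have hindint1 : ∫ s in (0:ℝ)..1, ind s = 1/2 := by
    have hii : IntervalIntegrable ind volume 0 1 := by
      rw [intervalIntegrable_iff_integrableOn_Ioc_of_le (by norm_num : (0:ℝ) ≤ 1)]
      exact (Integrable.bdd_mul (integrable_const 1) hindm.restrict (Filter.Eventually.of_forall hindb)).congr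
        (Filter.Eventually.of_forall (by intro s; simp))
    have hsplit : (∫ s in (0:ℝ)..(1/2:ℝ), ind s) + ∫ s in (1/2:ℝ)..1, ind s
        = ∫ s in (0:ℝ)..1, ind s :=
      intervalIntegral.integral_add_adjacent_intervals
        (hii.mono_set hsub1) (hii.mono_set hsub2)
    have h1 : ∫ s in (0:ℝ)..(1/2:ℝ), ind s = 1/2 := by
      have : ∫ s in (0:ℝ)..(1/2:ℝ), ind s = ∫ _ in (0:ℝ)..(1/2:ℝ), (1:ℝ) := by
        apply intervalIntegral.integral_congr_ae
        apply Filter.Eventually.of_forall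
        intro s hs
        rw [Set.uIoc_of_le (by norm_num : (0:ℝ) ≤ (1/2:ℝ))] at hs
        simp only [hinddef, if_pos hs.2]
      rw [this, intervalIntegral.integral_const]
      norm_num
    have h2 : ∫ s in (1/2:ℝ)..1, ind s = 0 := by
      have : ∫ s in (1/2:ℝ)..1, ind s = ∫ _ in (1/2:ℝ)..1, (0:ℝ) := by
        apply intervalIntegral.integral_congr_ae
        apply Filter.Eventually.of_forall
        intro s hs
        rw [Set.uIoc_of_le (by norm_num : (1/2:ℝ) ≤ 1)] at hs
        simp only [hinddef, if_neg (not_le.2 hs.1)]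
      rw [this]
      simp
    rw [← hsplit, h1, h2, add_zero]
  -- kernel
  set K : ℝ → ℝ := fun s => (1 - s) - c - (1 - 2*c) * ind s with hKdef
  have hKm : AEStronglyMeasurable K volume := by
    apply AEStronglyMeasurable.sub
    apply AEStronglyMeasurable.sub
    · fun_prop
    · exact aestronglyMeasurable_const
    · exact aestronglyMeasurable_const.mul hindm
  have hKb : ∀ s ∈ Set.Icc (0:ℝ) 1, |K s| ≤ 1/2 - c := by
    intro s hs
    rw [hKdef]
    by_cases h : s ≤ 1/2
    · simp only [hinddef, if_pos h]
      rw [abs_le]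
      constructor <;> [skip; skip] <;> (simp only [hcdef]; nlinarith [hs.1, hs.2])
    · simp only [hinddef, if_neg h]
      rw [abs_le]
      push_neg at h
      constructor <;> (simp only [hcdef]; nlinarith [hs.1, hs.2])
  have hii_K : IntervalIntegrable K volume 0 1 := by
    rw [intervalIntegrable_iff_integrableOn_Ioc_of_le (by norm_num : (0:ℝ) ≤ 1)]
    refine Integrable.mono' (integrable_const (1:ℝ)) hKm.restrict
      ((ae_restrict_iff' measurableSet_Ioc).2 (Filter.Eventually.of_forall ?_))
    intro s hs
    calc ‖K s‖ = |K s| := rfl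
      _ ≤ 1/2 - c := hKb s ⟨hs.1.le, hs.2⟩
      _ ≤ 1 := by simp only [hcdef]; nlinarith
  have hiiKf : IntervalIntegrable (fun s => K s * f' s) volume 0 1 := by
    rw [intervalIntegrable_iff_integrableOn_Ioc_of_le (by norm_num : (0:ℝ) ≤ 1)]
    refine hgi.bdd_mul (c := 1/2 - c) hKm.restrict
      ((ae_restrict_iff' measurableSet_Ioc).2 (Filter.Eventually.of_forall ?_))
    intro s hs
    exact hKb s ⟨hs.1.le, hs.2⟩
  have hKf' : ∫ s in (0:ℝ)..1, K s * f' s = J - c * I - (1 - 2*c) * I1 := by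
    have heq : (fun s => K s * f' s)
        = fun s => (1 - s) * f' s - (c * f' s + (1 - 2*c) * (ind s * f' s)) := by
      funext s; rw [hKdef]; ring
    rw [heq, intervalIntegral.integral_sub hii_oneminus
        ((hint.const_mul c).add (hii_indf.const_mul (1 - 2*c))),
      intervalIntegral.integral_add (hint.const_mul c) (hii_indf.const_mul (1 - 2*c)),
      intervalIntegral.integral_const_mul, intervalIntegral.integral_const_mul, hindint]
    rw [hJdef, hIdef]
    ring
  have hK0 : ∫ s in (0:ℝ)..1, K s = 0 := by
    have heq : K = fun s => (1 - s) - (c + (1 - 2*c) * ind s) := by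
      funext s; rw [hKdef]; ring
    have hii1 : IntervalIntegrable (fun s : ℝ => 1 - s) volume 0 1 := by
      apply Continuous.intervalIntegrable; fun_prop
    have hiiind : IntervalIntegrable ind volume 0 1 := by
      rw [intervalIntegrable_iff_integrableOn_Ioc_of_le (by norm_num : (0:ℝ) ≤ 1)]
      exact (Integrable.bdd_mul (integrable_const 1) hindm.restrict (Filter.Eventually.of_forall hindb)).congr
        (Filter.Eventually.of_forall (by intro s; simp))
    rw [heq, intervalIntegral.integral_sub hii1
        (intervalIntegrable_const.add (hiiind.const_mul (1 - 2*c))),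
      intervalIntegral.integral_add intervalIntegrable_const (hiiind.const_mul (1 - 2*c)),
      intervalIntegral.integral_const_mul, hindint1,
      intervalIntegral.integral_sub intervalIntegrable_const
        intervalIntegral.intervalIntegrable_id,
      intervalIntegral.integral_const, integral_id]
    rw [hcdef]
    norm_num
    ring
  have hE : (∫ t in (0:ℝ)..1, f t) - Real.sqrt 2 / 8 * f 0
        - (1 - Real.sqrt 2 / 4) * f (1/2) - Real.sqrt 2 / 8 * f 1
      = ∫ s in (0:ℝ)..1, K s * (f' s - Γ₁) := by
    have h2 : ∫ s in (0:ℝ)..1, K s * (f' s - Γ₁)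
        = (∫ s in (0:ℝ)..1, K s * f' s) - Γ₁ * ∫ s in (0:ℝ)..1, K s := by
      have heq : (fun s => K s * (f' s - Γ₁)) = fun s => K s * f' s - Γ₁ * K s := by
        funext s; ring
      rw [heq, intervalIntegral.integral_sub hiiKf (hii_K.const_mul Γ₁),
        intervalIntegral.integral_const_mul]
    rw [h2, hK0, hKf', hintf, hfh, hf1]
    have hc4 : Real.sqrt 2 / 4 = 2 * c := by rw [hcdef]; ring
    have hc8 : Real.sqrt 2 / 8 = c := hcdef.symm
    rw [hc4, hc8]
    ring
  have hiiKG : IntervalIntegrable (fun s => K s * (f' s - Γ₁)) volume 0 1 := by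
    have heq : (fun s => K s * (f' s - Γ₁)) = fun s => K s * f' s - Γ₁ * K s := by
      funext s; ring
    rw [heq]
    exact hiiKf.sub (hii_K.const_mul Γ₁)
  rw [hE]
  have habs : |∫ s in (0:ℝ)..1, K s * (f' s - Γ₁)|
      ≤ ∫ s in (0:ℝ)..1, |K s * (f' s - Γ₁)| :=
    intervalIntegral.abs_integral_le_integral_abs (by norm_num)
  have hmono : ∫ s in (0:ℝ)..1, |K s * (f' s - Γ₁)|
      ≤ ∫ s in (0:ℝ)..1, (1/2 - c) * (Γ₁ - f' s) := by
    refine intervalIntegral.integral_mono_on (by norm_num) hiiKG.abs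
      ((intervalIntegrable_const.sub hint).const_mul (1/2 - c)) ?_
    intro s hs
    have hb := hbd s hs
    have habs2 : |K s * (f' s - Γ₁)| = |K s| * (Γ₁ - f' s) := by
      rw [abs_mul, abs_of_nonpos (show f' s - Γ₁ ≤ 0 by linarith), neg_sub]
    rw [habs2]
    exact mul_le_mul_of_nonneg_right (hKb s hs) (by linarith)
  have hval : ∫ s in (0:ℝ)..1, (1/2 - c) * (Γ₁ - f' s) = (1/2 - c) * (Γ₁ - I) := by
    rw [intervalIntegral.integral_const_mul,
      intervalIntegral.integral_sub intervalIntegrable_const hint,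
      intervalIntegral.integral_const, hIdef]
    norm_num
  have hIeq : f 1 - f 0 = I := by rw [hf1]; ring
  rw [hIeq]
  exact le_trans habs (le_trans hmono (le_of_eq hval))
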